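/- With the same setup as the directional derivative bound (balls B_{3ε} around y₀, y₁, and q := τy₀+(1-τ)y₁ pairwise disjoint, |u| ≤ 1 on B_{2ε}(y₀) ∪ B_{2ε}(y₁), |u| ≤ C₀ on B_ε(q) ∩ Ω), for every unit vector ξ orthogonal to y₁ - y₀ and every p ∈ B_ε(q) ∩ Ω at which u is differentiable, one has ε·⟨∇u(p), ±ξ⟩ ≤ (1 + |y₀-y₁|/(6ε))·(1 + C₀). Consequently |∇u| is bounded on B_ε(q) ∩ Ω by a constant depending only on ε, C₀, and |y₀-y₁|. -/

import Mathlib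

open Metric Set

set_option maxHeartbeats 1000000

private lemma subgrad_ineq {n : ℕ} {Ω : Set (EuclideanSpace ℝ (Fin n))} (hΩopen : IsOpen Ω)
    {u : EuclideanSpace ℝ (Fin n) → ℝ}
    (hconv : ∀ x ∈ Ω, ∀ y ∈ Ω, ∀ τ : ℝ, τ ∈ Ioo (0:ℝ) 1 →
      τ • x + (1 - τ) • y ∈ Ω →
      u (τ • x + (1 - τ) • y) ≤ τ * u x + (1 - τ) * u y)
    {p v : EuclideanSpace ℝ (Fin n)} (hp : p ∈ Ω) (hpv : p + v ∈ Ω)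
    (hd : DifferentiableAt ℝ u p) :
    fderiv ℝ u p v ≤ u (p + v) - u p := by
  have hline : HasDerivAt (fun t : ℝ => p + t • v) v 0 := by
    simpa using ((hasDerivAt_id (0:ℝ)).smul_const v).const_add p
  have hgd : HasDerivAt (fun t : ℝ => u (p + t • v)) (fderiv ℝ u p v) 0 := by
    have hfd : HasFDerivAt u (fderiv ℝ u p) (p + (0:ℝ) • v) := by
      simpa using hd.hasFDerivAt
    exact hfd.comp_hasDerivAt 0 hline
  have htends : Filter.Tendsto (slope (fun t : ℝ => u (p + t • v)) 0)
      (nhdsWithin 0 (Ioi 0)) (nhds (fderiv ℝ u p v)) :=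
    ((hasDerivAt_iff_tendsto_slope).1 hgd).mono_left
      (nhdsWithin_mono 0 fun x hx => ne_of_gt hx)
  refine le_of_tendsto htends ?_
  have hmem : ∀ᶠ t : ℝ in nhds 0, p + t • v ∈ Ω := by
    have hc : ContinuousAt (fun t : ℝ => p + t • v) 0 := by fun_prop
    exact hc.eventually_mem (hΩopen.mem_nhds (by simpa using hp))
  have h1 : Ioo (0:ℝ) 1 ∈ nhdsWithin (0:ℝ) (Ioi 0) :=
    Ioo_mem_nhdsGT_of_mem ⟨le_refl 0, one_pos⟩
  filter_upwards [nhdsWithin_le_nhds hmem, h1] with t htΩ ht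
  have heq : t • (p + v) + (1 - t) • p = p + t • v := by module
  have key := hconv (p + v) hpv p hp t ht (by rw [heq]; exact htΩ)
  rw [heq] at key
  have ht0 : (0:ℝ) < t := ht.1
  have : slope (fun t : ℝ => u (p + t • v)) 0 t = (u (p + t • v) - u p) / t := by
    simp [slope_def_field]
  rw [this, div_le_iff₀ ht0]
  nlinarith [key]

theorem stmt_6 {n : ℕ} (Ω : Set (EuclideanSpace ℝ (Fin n))) (hΩopen : IsOpen Ω)
    (u : EuclideanSpace ℝ (Fin n) → ℝ)
    (hconv : ∀ x ∈ Ω, ∀ y ∈ Ω, ∀ τ : ℝ, τ ∈ Ioo (0:ℝ) 1 →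
      τ • x + (1 - τ) • y ∈ Ω →
      u (τ • x + (1 - τ) • y) ≤ τ * u x + (1 - τ) * u y)
    (y₀ y₁ : EuclideanSpace ℝ (Fin n)) (hne : y₀ ≠ y₁) (hy₀ : y₀ ∈ Ω) (hy₁ : y₁ ∈ Ω)
    (τ : ℝ) (hτ : τ ∈ Ioo (0:ℝ) 1) (ε : ℝ) (hε : 0 < ε) (C₀ : ℝ)
    (hdisj₀₁ : Disjoint (ball y₀ (3 * ε)) (ball y₁ (3 * ε)))
    (hdisj₀q : Disjoint (ball y₀ (3 * ε)) (ball (τ • y₀ + (1 - τ) • y₁) (3 * ε)))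
    (hdisj₁q : Disjoint (ball y₁ (3 * ε)) (ball (τ • y₀ + (1 - τ) • y₁) (3 * ε)))
    (hball₀ : ball y₀ (2 * ε) ⊆ Ω) (hball₁ : ball y₁ (2 * ε) ⊆ Ω)
    (hbd : ∀ x ∈ ball y₀ (2 * ε) ∪ ball y₁ (2 * ε), |u x| ≤ 1)
    (hbdq : ∀ x ∈ ball (τ • y₀ + (1 - τ) • y₁) ε ∩ Ω, |u x| ≤ C₀) :
    (∀ p ∈ ball (τ • y₀ + (1 - τ) • y₁) ε ∩ Ω, DifferentiableAt ℝ u p →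
      ∀ ξ : EuclideanSpace ℝ (Fin n), ‖ξ‖ = 1 → inner ℝ ξ (y₁ - y₀) = (0:ℝ) →
        ε * fderiv ℝ u p ξ ≤ (1 + ‖y₀ - y₁‖ / (6 * ε)) * (1 + C₀) ∧
        ε * fderiv ℝ u p (-ξ) ≤ (1 + ‖y₀ - y₁‖ / (6 * ε)) * (1 + C₀)) ∧
    ∃ C : ℝ, ∀ p ∈ ball (τ • y₀ + (1 - τ) • y₁) ε ∩ Ω, DifferentiableAt ℝ u p →
      ‖fderiv ℝ u p‖ ≤ C := by
  set q := τ • y₀ + (1 - τ) • y₁ with hq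
  -- Key: for any p in the ball and ANY unit vector ξ, ε * f' ξ ≤ 1 + C₀.
  have key : ∀ p ∈ ball q ε ∩ Ω, DifferentiableAt ℝ u p →
      ∀ ξ : EuclideanSpace ℝ (Fin n), ‖ξ‖ = 1 →
      ε * fderiv ℝ u p ξ ≤ 1 + C₀ := by
    intro p hp hd ξ hξ
    obtain ⟨hpb, hpΩ⟩ := hp
    have hpq : ‖p - q‖ < ε := by rw [← dist_eq_norm]; exact mem_ball.1 hpb
    have hεξ : ‖ε • ξ‖ = ε := by rw [norm_smul, hξ]; simp [abs_of_pos hε]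
    set v₀ : EuclideanSpace ℝ (Fin n) := (1 - τ) • (y₀ - y₁) + ε • ξ with hv₀
    set v₁ : EuclideanSpace ℝ (Fin n) := τ • (y₁ - y₀) + ε • ξ with hv₁
    have hm₀ : p + v₀ ∈ ball y₀ (2 * ε) := by
      rw [mem_ball, dist_eq_norm]
      have h : p + v₀ - y₀ = (p - q) + ε • ξ := by rw [hv₀, hq]; module
      rw [h]
      calc ‖(p - q) + ε • ξ‖ ≤ ‖p - q‖ + ‖ε • ξ‖ := norm_add_le _ _
        _ < 2 * ε := by rw [hεξ]; linarith
    have hm₁ : p + v₁ ∈ ball y₁ (2 * ε) := by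
      rw [mem_ball, dist_eq_norm]
      have h : p + v₁ - y₁ = (p - q) + ε • ξ := by rw [hv₁, hq]; module
      rw [h]
      calc ‖(p - q) + ε • ξ‖ ≤ ‖p - q‖ + ‖ε • ξ‖ := norm_add_le _ _
        _ < 2 * ε := by rw [hεξ]; linarith
    have hb₀ := subgrad_ineq hΩopen hconv hpΩ (hball₀ hm₀) hd
    have hb₁ := subgrad_ineq hΩopen hconv hpΩ (hball₁ hm₁) hd
    have hub₀ : u (p + v₀) ≤ 1 := (abs_le.1 (hbd _ (Or.inl hm₀))).2
    have hub₁ : u (p + v₁) ≤ 1 := (abs_le.1 (hbd _ (Or.inr hm₁))).2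
    have hlp : -C₀ ≤ u p := (abs_le.1 (hbdq p ⟨hpb, hpΩ⟩)).1
    have hdecomp : ε • ξ = τ • v₀ + (1 - τ) • v₁ := by rw [hv₀, hv₁]; module
    have hlin : ε * fderiv ℝ u p ξ
        = τ * fderiv ℝ u p v₀ + (1 - τ) * fderiv ℝ u p v₁ := by
      have h : (fderiv ℝ u p) (ε • ξ) = (fderiv ℝ u p) (τ • v₀ + (1 - τ) • v₁) := by
        rw [← hdecomp]
      rw [map_add, map_smul, map_smul, map_smul] at h
      rw [smul_eq_mul, smul_eq_mul, smul_eq_mul] at h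
      exact h
    have h0 : fderiv ℝ u p v₀ ≤ 1 + C₀ := by linarith
    have h1 : fderiv ℝ u p v₁ ≤ 1 + C₀ := by linarith
    obtain ⟨hτ0, hτ1⟩ := hτ
    nlinarith [h0, h1, hτ0, hτ1]
  have hC₀nn : ∀ p ∈ ball q ε ∩ Ω, 0 ≤ 1 + C₀ := by
    intro p hp
    have h := hbdq p hp
    have := abs_nonneg (u p)
    linarith
  constructor
  · intro p hp hd ξ hξ _
    have h₁ := key p hp hd ξ hξ
    have h₂ := key p hp hd (-ξ) (by rw [norm_neg, hξ])
    have hnn := hC₀nn p hp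
    have hnorm : 0 ≤ ‖y₀ - y₁‖ / (6 * ε) :=
      div_nonneg (norm_nonneg _) (by linarith)
    constructor <;> nlinarith
  · refine ⟨max ((1 + C₀) / ε) 0, fun p hp hd => ?_⟩
    have hnn := hC₀nn p hp
    refine ContinuousLinearMap.opNorm_le_bound _ (le_max_right _ _) fun x => ?_
    rcases eq_or_ne x 0 with rfl | hx
    · simp [mul_nonneg (le_max_right ((1 + C₀) / ε) 0) (norm_nonneg (0 : EuclideanSpace ℝ (Fin n)))]
    · have hxn : (0:ℝ) < ‖x‖ := norm_pos_iff.2 hx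
      set ξ : EuclideanSpace ℝ (Fin n) := ‖x‖⁻¹ • x with hξdef
      have hξ : ‖ξ‖ = 1 := by
        rw [hξdef, norm_smul, norm_inv, norm_norm, inv_mul_cancel₀ hxn.ne']
      have h₁ := key p hp hd ξ hξ
      have h₂ := key p hp hd (-ξ) (by rw [norm_neg, hξ])
      have hval : fderiv ℝ u p ξ = ‖x‖⁻¹ * fderiv ℝ u p x := by
        rw [hξdef, map_smul, smul_eq_mul]
      have hvneg : fderiv ℝ u p (-ξ) = -(‖x‖⁻¹ * fderiv ℝ u p x) := by
        rw [map_neg, hval]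
      rw [hval] at h₁
      rw [hvneg] at h₂
      have h₁' : ε * fderiv ℝ u p x ≤ (1 + C₀) * ‖x‖ := by
        have h := mul_le_mul_of_nonneg_left h₁ hxn.le
        calc ε * fderiv ℝ u p x = ‖x‖ * (ε * (‖x‖⁻¹ * fderiv ℝ u p x)) := by
              field_simp
          _ ≤ ‖x‖ * (1 + C₀) := h
          _ = (1 + C₀) * ‖x‖ := mul_comm _ _
      have h₂' : ε * -(fderiv ℝ u p x) ≤ (1 + C₀) * ‖x‖ := by
        have h := mul_le_mul_of_nonneg_left h₂ hxn.le
        calc ε * -(fderiv ℝ u p x) = ‖x‖ * (ε * -(‖x‖⁻¹ * fderiv ℝ u p x)) := by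
              field_simp
          _ ≤ ‖x‖ * (1 + C₀) := h
          _ = (1 + C₀) * ‖x‖ := mul_comm _ _
      have habs : |fderiv ℝ u p x| ≤ (1 + C₀) / ε * ‖x‖ := by
        rw [abs_le]
        constructor
        · rw [neg_le, div_mul_eq_mul_div, le_div_iff₀ hε]
          linarith [h₂']
        · rw [div_mul_eq_mul_div, le_div_iff₀ hε]
          linarith [h₁']
      calc ‖fderiv ℝ u p x‖ = |fderiv ℝ u p x| := rfl
        _ ≤ (1 + C₀) / ε * ‖x‖ := habs
        _ ≤ max ((1 + C₀) / ε) 0 * ‖x‖ :=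
          mul_le_mul_of_nonneg_right (le_max_left _ _) (norm_nonneg _)
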